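/- arXiv:1209.1649 — 2 statements merged into one kernel-verified Lean document; each statement's English description precedes it below -/
import Mathlib

section
/- Structure of the sets G_{r,s} (Section 4, structural claims): Let m ≥ 1, fix a word a ∈ (Fin n)^{m−1} and indices r ≠ s with r, s < n. Then the set G_{r,s} has exactly (n−2)(n−3)/2 elements, and every vertex belonging to G_{r,s} is adjacent in Γ_m to exactly 4 vertices of F_{r,s}. -/
open Finset

noncomputable section

/-- Ambient Euclidean space `ℝ^{n-1}`. -/
abbrev Amb (n : ℕ) := EuclideanSpace ℝ (Fin (n - 1))

/-- The contraction `f_i(x) = (x + x_i)/2`. -/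
def fmap {n : ℕ} (pts : Fin n → Amb n) (i : Fin n) (x : Amb n) : Amb n :=
  (2 : ℝ)⁻¹ • (x + pts i)

/-- Composition of contractions along a list (first entry applied last... actually first). -/
def fList {n : ℕ} (pts : Fin n → Amb n) : List (Fin n) → Amb n → Amb n
  | [] => id
  | i :: t => fmap pts i ∘ fList pts t

/-- The `m`-contraction `f_w = f_{w_0} ∘ ⋯ ∘ f_{w_{m-1}}`. -/
def fWord {n m : ℕ} (pts : Fin n → Amb n) (w : Fin m → Fin n) : Amb n → Amb n :=
  fList pts (List.ofFn w)

/-- The vertex set `V_m = ⋃_w f_w(V_0)`, where `V_0 = {x_0, …, x_{n-1}}`. -/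
def V {n : ℕ} (pts : Fin n → Amb n) (m : ℕ) : Set (Amb n) :=
  ⋃ w : Fin m → Fin n, fWord pts w '' Set.range pts

/-- Adjacency in the graph `Γ_m`. -/
def Adj {n : ℕ} (pts : Fin n → Amb n) (m : ℕ) (x y : Amb n) : Prop :=
  x ≠ y ∧ ∃ w : Fin m → Fin n,
    x ∈ fWord pts w '' Set.range pts ∧ y ∈ fWord pts w '' Set.range pts

/-- The graph Laplacian `Δ_m u (x) = ∑_{y ~ x} (u(x) - u(y))`. -/
def lap {n : ℕ} (pts : Fin n → Amb n) (m : ℕ) (u : Amb n → ℝ) (x : Amb n) : ℝ :=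
  ∑ᶠ y ∈ {y | Adj pts m x y}, (u x - u y)

/-- `u` is an eigenfunction of `Δ_m` with eigenvalue `lam`:
`Δ_m u (x) = lam * u x` for all `x ∈ V_m \ V_0`. -/
def IsEigen {n : ℕ} (pts : Fin n → Amb n) (m : ℕ) (u : Amb n → ℝ) (lam : ℝ) : Prop :=
  ∀ x ∈ V pts m \ V pts 0, lap pts m u x = lam * u x

/-- The point `x_{r,s} = f_a((x_r + x_s)/2)` for a word `a` of length `m-1`. -/
def xpt {n m : ℕ} (pts : Fin n → Amb n) (a : Fin m → Fin n) (r s : Fin n) : Amb n :=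
  fWord pts a ((2 : ℝ)⁻¹ • (pts r + pts s))

/-- The graph energy `E_m(u) = ∑_{x ~ y} (u(x) - u(y))²`, summed over unordered
adjacent pairs (each ordered pair counted once, then halved). -/
def energy {n : ℕ} (pts : Fin n → Amb n) (m : ℕ) (u : Amb n → ℝ) : ℝ :=
  (2 : ℝ)⁻¹ * ∑ᶠ p ∈ {p : Amb n × Amb n | Adj pts m p.1 p.2}, (u p.1 - u p.2) ^ 2


section AuxLemmas

variable {n : ℕ} (pts : Fin n → Amb n)

lemma fList_concat (L : List (Fin n)) (i : Fin n) (x : Amb n) :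
    fList pts (L.concat i) x = fList pts L (fmap pts i x) := by
  induction L with
  | nil => rfl
  | cons h t ih =>
    simp only [List.concat_eq_append] at ih
    simp [fList, ih]

lemma fWord_succ {M : ℕ} (w : Fin (M + 1) → Fin n) (x : Amb n) :
    fWord pts w x = fWord pts (fun k : Fin M => w k.castSucc) (fmap pts (w (Fin.last M)) x) := by
  rw [fWord, List.ofFn_succ', fList_concat]; rfl

lemma fWord_zero (w : Fin 0 → Fin n) (x : Amb n) : fWord pts w x = x := rfl

lemma fWord_cons {M : ℕ} (w : Fin (M + 1) → Fin n) (x : Amb n) :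
    fWord pts w x = fmap pts (w 0) (fWord pts (fun k : Fin M => w k.succ) x) := by
  rw [fWord, List.ofFn_succ]; rfl

lemma fWord_formula {M : ℕ} (w : Fin M → Fin n) (x : Amb n) :
    fWord pts w x = ((2:ℝ)⁻¹)^M • x + ∑ k : Fin M, ((2:ℝ)⁻¹)^((k:ℕ)+1) • pts (w k) := by
  induction M with
  | zero => simp [fWord_zero]
  | succ M ih =>
    rw [fWord_cons, ih, fmap, Fin.sum_univ_succ]
    simp only [smul_add, smul_smul, Finset.smul_sum, Fin.val_succ, Fin.val_zero, ← pow_succ', zero_add, pow_one]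
    abel

lemma rep_aux (c : ℝ) (t : Fin n) :
    ∑ u, (c * if t = u then 1 else 0) • pts u = c • pts t := by
  simp [mul_ite, ite_smul, Finset.sum_ite_eq]

/-- real weight of `fWord w (pts t)` -/
def cW {M : ℕ} (w : Fin M → Fin n) (t u : Fin n) : ℝ :=
  ((2:ℝ)⁻¹)^M * (if t = u then 1 else 0)
    + ∑ k : Fin M, ((2:ℝ)⁻¹)^((k:ℕ)+1) * (if w k = u then 1 else 0)

/-- real weight of `xpt a i j` -/
def dW {M : ℕ} (a : Fin M → Fin n) (i j u : Fin n) : ℝ :=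
  ((2:ℝ)⁻¹)^(M+1) * (if i = u then 1 else 0)
    + ((2:ℝ)⁻¹)^(M+1) * (if j = u then 1 else 0)
    + ∑ k : Fin M, ((2:ℝ)⁻¹)^((k:ℕ)+1) * (if a k = u then 1 else 0)

lemma rep_sum_swap {M : ℕ} (w : Fin M → Fin n) :
    ∑ u, (∑ k : Fin M, ((2:ℝ)⁻¹)^((k:ℕ)+1) * (if w k = u then 1 else 0)) • pts u
      = ∑ k : Fin M, ((2:ℝ)⁻¹)^((k:ℕ)+1) • pts (w k) := by
  simp only [Finset.sum_smul]
  rw [Finset.sum_comm]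
  exact Finset.sum_congr rfl fun k _ => rep_aux pts _ _

lemma rep1 {M : ℕ} (w : Fin M → Fin n) (t : Fin n) :
    fWord pts w (pts t) = ∑ u, cW w t u • pts u := by
  rw [fWord_formula]
  simp only [cW, add_smul, Finset.sum_add_distrib, rep_aux, rep_sum_swap]

lemma rep2 {M : ℕ} (a : Fin M → Fin n) (i j : Fin n) :
    xpt pts a i j = ∑ u, dW a i j u • pts u := by
  rw [xpt, fWord_formula]
  simp only [dW, add_smul, Finset.sum_add_distrib, rep_aux, rep_sum_swap]
  rw [smul_smul, ← pow_succ, smul_add]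

lemma geo : ∀ M : ℕ, ∑ k : Fin M, ((2:ℝ)⁻¹)^((k:ℕ)+1) = 1 - ((2:ℝ)⁻¹)^M := by
  intro M; induction M with
  | zero => simp
  | succ M ih =>
    rw [Fin.sum_univ_castSucc]
    simp only [Fin.coe_castSucc, Fin.val_last]
    rw [ih]; ring

lemma csum {M : ℕ} (w : Fin M → Fin n) (t : Fin n) : ∑ u, cW w t u = 1 := by
  simp only [cW]
  rw [Finset.sum_add_distrib, Finset.sum_comm]
  simp only [mul_ite, mul_one, mul_zero, Finset.sum_ite_eq, Finset.mem_univ, if_true]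
  rw [geo]; ring

lemma dsum {M : ℕ} (a : Fin M → Fin n) (i j : Fin n) : ∑ u, dW a i j u = 1 := by
  simp only [dW]
  rw [Finset.sum_add_distrib, Finset.sum_add_distrib, Finset.sum_comm]
  simp only [mul_ite, mul_one, mul_zero, Finset.sum_ite_eq, Finset.mem_univ, if_true]
  rw [geo]; ring

lemma weight_eq (hpts : AffineIndependent ℝ pts) (c d : Fin n → ℝ)
    (hc : ∑ u, c u = 1) (hd : ∑ u, d u = 1)
    (h : ∑ u, c u • pts u = ∑ u, d u • pts u) : c = d := by
  refine (affineIndependent_iff_eq_of_fintype_affineCombination_eq ℝ pts).mp hpts c d hc hd ?_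
  rw [Finset.affineCombination_eq_linear_combination _ _ _ hc,
    Finset.affineCombination_eq_linear_combination _ _ _ hd, h]

lemma pow_key {M k : ℕ} (hk : k ≤ M) : (2:ℝ)^(M+1) * ((2:ℝ)⁻¹)^(k+1) = 2^(M-k) := by
  have hM : M + 1 = (M - k) + (k + 1) := by omega
  rw [hM, pow_add]
  rw [inv_pow, mul_assoc, mul_inv_cancel₀ (by positivity)]
  ring

lemma cW_scaled {M : ℕ} (w : Fin (M+1) → Fin n) (t u : Fin n) :
    (2:ℝ)^(M+1) * cW w t u
      = (((if t = u then 1 else 0) + ∑ k : Fin (M+1), 2^(M-(k:ℕ)) * (if w k = u then 1 else 0) : ℕ) : ℝ) := by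
  push_cast
  simp only [cW, mul_add, Finset.mul_sum]
  congr 1
  · rw [← mul_assoc, pow_key (le_refl M), Nat.sub_self, pow_zero, one_mul]
  · refine Finset.sum_congr rfl fun k _ => ?_
    rw [← mul_assoc, pow_key (Nat.lt_succ_iff.mp k.isLt)]

lemma dW_scaled {M : ℕ} (a : Fin M → Fin n) (i j u : Fin n) :
    (2:ℝ)^(M+1) * dW a i j u
      = (((if i = u then 1 else 0) + (if j = u then 1 else 0)
          + ∑ k : Fin M, 2^(M-(k:ℕ)) * (if a k = u then 1 else 0) : ℕ) : ℝ) := by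
  push_cast
  simp only [dW, mul_add, Finset.mul_sum]
  congr 1
  · congr 1
    · rw [← mul_assoc, pow_key (le_refl M), Nat.sub_self, pow_zero, one_mul]
    · rw [← mul_assoc, pow_key (le_refl M), Nat.sub_self, pow_zero, one_mul]
  · refine Finset.sum_congr rfl fun k _ => ?_
    rw [← mul_assoc, pow_key (le_of_lt k.isLt)]

lemma nat_eq {M : ℕ} (w : Fin (M+1) → Fin n) (t i j : Fin n) (a : Fin M → Fin n)
    (h : cW w t = dW a i j) (u : Fin n) :
    ((if t = u then 1 else 0) + ∑ k : Fin (M+1), 2^(M-(k:ℕ)) * (if w k = u then 1 else 0) : ℕ)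
      = (if i = u then 1 else 0) + (if j = u then 1 else 0)
          + ∑ k : Fin M, 2^(M-(k:ℕ)) * (if a k = u then 1 else 0) := by
  have h2 : (2:ℝ)^(M+1) * cW w t u = (2:ℝ)^(M+1) * dW a i j u := by rw [h]
  rw [cW_scaled, dW_scaled] at h2
  exact_mod_cast h2

lemma sum_pow_lt (M : ℕ) : ∑ k : Fin M, 2^(M-(k:ℕ)) < 2^(M+1) := by
  induction M with
  | zero => simp
  | succ M ih =>
    rw [Fin.sum_univ_succ]
    have e : ∀ k : Fin M, (2:ℕ)^(M+1-((k.succ:ℕ))) = 2^(M-(k:ℕ)) := by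
      intro k; congr 1; simp only [Fin.val_succ]; omega
    rw [Finset.sum_congr rfl fun k _ => e k]
    have h2 : (2:ℕ)^(M+2) = 2^(M+1) + 2^(M+1) := by ring
    simp only [Fin.val_zero, Nat.sub_zero]
    omega

lemma BU (M : ℕ) (v v' : Fin M → Fin n)
    (h : ∀ u, ∑ k : Fin M, 2^(M-(k:ℕ)) * (if v k = u then 1 else 0)
            = ∑ k : Fin M, 2^(M-(k:ℕ)) * (if v' k = u then 1 else 0)) : v = v' := by
  induction M with
  | zero => funext k; exact k.elim0
  | succ M ih =>
    have e : ∀ (g : Fin (M+1) → Fin n) u, ∑ k : Fin (M+1), 2^(M+1-(k:ℕ)) * (if g k = u then 1 else 0)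
        = 2^(M+1) * (if g 0 = u then 1 else 0)
          + ∑ k : Fin M, 2^(M-(k:ℕ)) * (if g k.succ = u then 1 else 0) := by
      intro g u
      rw [Fin.sum_univ_succ]
      congr 1
      refine Finset.sum_congr rfl fun k _ => ?_
      congr 2
      simp only [Fin.val_succ]; omega
    have hbound : ∀ (g : Fin M → Fin n) u,
        ∑ k : Fin M, 2^(M-(k:ℕ)) * (if g k = u then 1 else 0) < 2^(M+1) := by
      intro g u
      calc ∑ k : Fin M, 2^(M-(k:ℕ)) * (if g k = u then 1 else 0)
          ≤ ∑ k : Fin M, 2^(M-(k:ℕ)) * 1 := by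
            refine Finset.sum_le_sum fun k _ => ?_
            gcongr
            split <;> omega
        _ < 2^(M+1) := by simpa using sum_pow_lt M
    have h0 : v 0 = v' 0 := by
      by_contra hne
      have h1 := h (v 0)
      rw [e, e] at h1
      rw [if_pos rfl, if_neg (fun hx => hne hx.symm)] at h1
      have b1 := hbound (fun k => v k.succ) (v 0)
      have b2 := hbound (fun k => v' k.succ) (v 0)
      omega
    have htail : (fun k : Fin M => v k.succ) = (fun k : Fin M => v' k.succ) := by
      refine ih _ _ fun u => ?_
      have h1 := h u
      rw [e, e, h0] at h1
      omega
    funext k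
    refine Fin.cases h0 (fun k => ?_) k
    exact congrFun htail k

lemma nat_key {M : ℕ} (w : Fin (M+1) → Fin n) (t i j : Fin n) (a : Fin M → Fin n) (hij : i ≠ j)
    (h : ∀ u, ((if t = u then 1 else 0) + ∑ k : Fin (M+1), 2^(M-(k:ℕ)) * (if w k = u then 1 else 0) : ℕ)
      = (if i = u then 1 else 0) + (if j = u then 1 else 0)
          + ∑ k : Fin M, 2^(M-(k:ℕ)) * (if a k = u then 1 else 0)) :
    (∀ k : Fin M, w k.castSucc = a k) ∧
      ((w (Fin.last M) = i ∧ t = j) ∨ (w (Fin.last M) = j ∧ t = i)) := by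
  have h' : ∀ u, ((if t = u then 1 else 0) + (if w (Fin.last M) = u then 1 else 0)
      + ∑ k : Fin M, 2^(M-(k:ℕ)) * (if w k.castSucc = u then 1 else 0) : ℕ)
      = (if i = u then 1 else 0) + (if j = u then 1 else 0)
        + ∑ k : Fin M, 2^(M-(k:ℕ)) * (if a k = u then 1 else 0) := by
    intro u
    have hu := h u
    rw [Fin.sum_univ_castSucc] at hu
    simp only [Fin.coe_castSucc, Fin.val_last, Nat.sub_self, pow_zero, one_mul] at hu
    omega
  have heven : ∀ (g : Fin M → Fin n) u,
      2 ∣ ∑ k : Fin M, 2^(M-(k:ℕ)) * (if g k = u then 1 else 0) := by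
    intro g u
    refine Finset.dvd_sum fun k _ => Dvd.dvd.mul_right ?_ _
    exact dvd_pow_self 2 (by have := k.isLt; omega : M - (k:ℕ) ≠ 0)
  have hdisj : (w (Fin.last M) = i ∧ t = j) ∨ (w (Fin.last M) = j ∧ t = i) := by
    have hi := h' i
    have hj := h' j
    obtain ⟨A1, hA1⟩ := heven (fun k => w k.castSucc) i
    obtain ⟨B1, hB1⟩ := heven a i
    obtain ⟨A2, hA2⟩ := heven (fun k => w k.castSucc) j
    obtain ⟨B2, hB2⟩ := heven a j
    rw [hA1, hB1] at hi
    rw [hA2, hB2] at hj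
    by_cases hwi : w (Fin.last M) = i
    · left
      refine ⟨hwi, ?_⟩
      by_contra htj
      have hwj : ¬ w (Fin.last M) = j := by rw [hwi]; exact hij
      simp only [if_neg htj, if_neg hwj, if_neg hij, if_pos rfl, if_true] at hj
      omega
    · right
      have hti : t = i := by
        by_contra hti
        simp only [if_neg hti, if_neg hwi, if_pos rfl, if_true,
          if_neg (fun e => hij e.symm : ¬ j = i)] at hi
        omega
      refine ⟨?_, hti⟩
      by_contra hwj
      have htj : ¬ t = j := by rw [hti]; exact hij
      simp only [if_neg htj, if_neg hwj, if_neg hij, if_pos rfl, if_true] at hj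
      omega
  have hcancel : ∀ u, ∑ k : Fin M, 2^(M-(k:ℕ)) * (if w k.castSucc = u then 1 else 0)
      = ∑ k : Fin M, 2^(M-(k:ℕ)) * (if a k = u then 1 else 0) := by
    intro u
    have h'' := h' u
    rcases hdisj with ⟨h1, h2⟩ | ⟨h1, h2⟩ <;> rw [h1, h2] at h'' <;> omega
  have hBU := BU M (fun k => w k.castSucc) a hcancel
  exact ⟨fun k => congrFun hBU k, hdisj⟩

lemma key (hpts : AffineIndependent ℝ pts) {M : ℕ} (w : Fin (M+1) → Fin n) (t : Fin n)
    (a : Fin M → Fin n) (i j : Fin n) (hij : i ≠ j)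
    (heq : fWord pts w (pts t) = xpt pts a i j) :
    (∀ k : Fin M, w k.castSucc = a k) ∧
      ((w (Fin.last M) = i ∧ t = j) ∨ (w (Fin.last M) = j ∧ t = i)) := by
  have hw : cW w t = dW a i j :=
    weight_eq pts hpts _ _ (csum w t) (dsum a i j) (by rw [← rep1, ← rep2, heq])
  exact nat_key w t i j a hij (nat_eq w t i j a hw)

lemma xpt_comm {M : ℕ} (a : Fin M → Fin n) (i j : Fin n) :
    xpt pts a i j = xpt pts a j i := by rw [xpt, xpt, add_comm]

lemma cell_mem {M : ℕ} (w : Fin (M+1) → Fin n) (a : Fin M → Fin n)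
    (hwa : ∀ k, w k.castSucc = a k) (t : Fin n) :
    fWord pts w (pts t) = xpt pts a (w (Fin.last M)) t := by
  have h1 : (fun k : Fin M => w k.castSucc) = a := funext hwa
  rw [fWord_succ, h1, xpt, fmap, add_comm (pts t) (pts (w (Fin.last M)))]

lemma snoc_cell {M : ℕ} (a : Fin M → Fin n) (c t : Fin n) :
    fWord pts (Fin.snoc a c) (pts t) = xpt pts a c t := by
  have := cell_mem pts (Fin.snoc a c) a (fun k => by simp) t
  rwa [Fin.snoc_last] at this

lemma xpt_inj (hpts : AffineIndependent ℝ pts) {M : ℕ} (a : Fin M → Fin n) {i j k l : Fin n}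
    (hkl : k ≠ l) (h : xpt pts a i j = xpt pts a k l) :
    (i = k ∧ j = l) ∨ (i = l ∧ j = k) := by
  have hm : fWord pts (Fin.snoc a i) (pts j) = xpt pts a k l := by
    rw [snoc_cell]; exact h
  obtain ⟨-, hd⟩ := key pts hpts _ _ _ _ _ hkl hm
  rw [Fin.snoc_last] at hd
  tauto

lemma adj_common {M : ℕ} (a : Fin M → Fin n) (c t1 t2 : Fin n)
    (hne : xpt pts a c t1 ≠ xpt pts a c t2) :
    Adj pts (M+1) (xpt pts a c t1) (xpt pts a c t2) :=
  ⟨hne, Fin.snoc a c, ⟨pts t1, ⟨t1, rfl⟩, snoc_cell pts a c t1⟩,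
    ⟨pts t2, ⟨t2, rfl⟩, snoc_cell pts a c t2⟩⟩

end AuxLemmas

/-- Structure of the sets G_{r,s}: cardinality and adjacency to F_{r,s}. -/
theorem G_set_structure
    (n : ℕ) (hn : 2 ≤ n) (pts : Fin n → Amb n) (hpts : AffineIndependent ℝ pts)
    (m : ℕ) (hm : 1 ≤ m) (a : Fin (m - 1) → Fin n)
    (r s : Fin n) (hrs : r ≠ s) :
    {p : Amb n | ∃ i j : Fin n, i ≠ j ∧ i ≠ r ∧ i ≠ s ∧ j ≠ r ∧ j ≠ s ∧
        p = xpt pts a i j}.ncard = (n - 2) * (n - 3) / 2 ∧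
    ∀ p ∈ {p : Amb n | ∃ i j : Fin n, i ≠ j ∧ i ≠ r ∧ i ≠ s ∧ j ≠ r ∧ j ≠ s ∧
        p = xpt pts a i j},
      {q : Amb n | (∃ i j : Fin n, i ≠ j ∧ ({i, j} : Set (Fin n)) ≠ {r, s} ∧
          (i = r ∨ i = s ∨ j = r ∨ j = s) ∧ q = xpt pts a i j) ∧
        Adj pts m p q}.ncard = 4 := by
  obtain ⟨M, rfl⟩ : ∃ M, m = M + 1 := ⟨m - 1, by omega⟩
  classical
  have hNE : ∀ {i1 j1 i2 j2 : Fin n}, i2 ≠ j2 → (i1 ≠ i2 ∨ j1 ≠ j2) → (i1 ≠ j2 ∨ j1 ≠ i2) →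
      xpt pts a i1 j1 ≠ xpt pts a i2 j2 := by
    intro i1 j1 i2 j2 h2 hA hB h
    rcases xpt_inj pts hpts a h2 h with ⟨e1, e2⟩ | ⟨e1, e2⟩ <;> tauto
  constructor
  · -- cardinality of G
    set S : Finset (Fin n) := Finset.univ.filter (fun u => u ≠ r ∧ u ≠ s) with hSdef
    set T : Finset (Fin n × Fin n) := (S ×ˢ S).filter (fun p => p.1 < p.2) with hTdef
    have hScard : S.card = n - 2 := by
      have hseq : S = Finset.univ \ ({r, s} : Finset (Fin n)) := by
        ext u
        simp [hSdef, not_or]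
      rw [hseq, Finset.card_sdiff_of_subset (Finset.subset_univ _), Finset.card_univ, Fintype.card_fin,
        Finset.card_pair hrs]
    have hstep := Finset.card_filter_add_card_filter_not
      (s := S.offDiag) (p := fun p => p.1 < p.2)
    have hT1 : S.offDiag.filter (fun p => p.1 < p.2) = T := by
      ext p
      simp only [Finset.mem_filter, Finset.mem_offDiag, hTdef, Finset.mem_product]
      constructor
      · rintro ⟨⟨h1, h2, h3⟩, h4⟩; exact ⟨⟨h1, h2⟩, h4⟩
      · rintro ⟨⟨h1, h2⟩, h4⟩; exact ⟨⟨h1, h2, ne_of_lt h4⟩, h4⟩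
    have hT2 : (S.offDiag.filter (fun p => ¬ p.1 < p.2)).card = T.card := by
      refine Finset.card_bij (fun p _ => p.swap) ?_ ?_ ?_
      · rintro p hp
        simp only [Finset.mem_filter, Finset.mem_offDiag] at hp
        obtain ⟨⟨h1, h2, h3⟩, h4⟩ := hp
        have hlt : p.2 < p.1 := lt_of_le_of_ne (not_lt.mp h4) (Ne.symm h3)
        simp only [hTdef, Finset.mem_filter, Finset.mem_product]
        exact ⟨⟨h2, h1⟩, hlt⟩
      · intro p hp q hq hpq
        exact Prod.swap_injective hpq
      · intro q hq
        simp only [hTdef, Finset.mem_filter, Finset.mem_product] at hq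
        obtain ⟨⟨h1, h2⟩, hlt⟩ := hq
        refine ⟨q.swap, ?_, by simp⟩
        simp only [Finset.mem_filter, Finset.mem_offDiag]
        exact ⟨⟨h2, h1, ne_of_gt hlt⟩, not_lt.mpr (le_of_lt hlt)⟩
    have hoff : S.offDiag.card = (n - 2) * (n - 2) - (n - 2) := by
      rw [Finset.offDiag_card, hScard]
    have hmul : (n - 2) * (n - 2) - (n - 2) = (n - 2) * (n - 3) := by
      rcases Nat.lt_or_ge n 3 with h | h
      · have : n = 2 := by omega
        subst this; rfl
      · have h2 : n - 2 = (n - 3) + 1 := by omega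
        have h3 : (n - 3 + 1) * (n - 3 + 1) = (n - 3 + 1) * (n - 3) + (n - 3 + 1) := by ring
        rw [h2]
        omega
    rw [hT1] at hstep
    rw [hT2] at hstep
    have hTcard : T.card + T.card = (n - 2) * (n - 3) := by omega
    have hGT : {p : Amb n | ∃ i j : Fin n, i ≠ j ∧ i ≠ r ∧ i ≠ s ∧ j ≠ r ∧ j ≠ s ∧
        p = xpt pts a i j} = ↑(T.image (fun p => xpt pts a p.1 p.2)) := by
      ext p
      simp only [Set.mem_setOf_eq, Finset.coe_image, Set.mem_image, Finset.mem_coe, hTdef,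
        Finset.mem_filter, Finset.mem_product, hSdef, Finset.mem_univ, true_and]
      constructor
      · rintro ⟨i, j, hij, hir, his, hjr, hjs, rfl⟩
        rcases lt_or_gt_of_ne hij with h | h
        · exact ⟨(i, j), ⟨⟨⟨hir, his⟩, ⟨hjr, hjs⟩⟩, h⟩, rfl⟩
        · exact ⟨(j, i), ⟨⟨⟨hjr, hjs⟩, ⟨hir, his⟩⟩, h⟩, (xpt_comm pts a i j).symm⟩
      · rintro ⟨⟨i, j⟩, ⟨⟨⟨hir, his⟩, ⟨hjr, hjs⟩⟩, hlt⟩, rfl⟩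
        exact ⟨i, j, ne_of_lt hlt, hir, his, hjr, hjs, rfl⟩
    have hinj : Set.InjOn (fun p : Fin n × Fin n => xpt pts a p.1 p.2) T := by
      intro p hp q hq h
      simp only [hTdef, Finset.coe_filter, Set.mem_setOf_eq, Finset.mem_product] at hp hq
      rcases xpt_inj pts hpts a (ne_of_lt hq.2) h with ⟨e1, e2⟩ | ⟨e1, e2⟩
      · exact Prod.ext e1 e2
      · exfalso
        have := hp.2
        rw [e1, e2] at this
        exact absurd hq.2 (lt_asymm this)
    rw [hGT, Set.ncard_coe_finset, Finset.card_image_of_injOn hinj]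
    omega
  · -- each point of G has exactly 4 F-neighbours
    rintro p ⟨i, j, hij, hir, his, hjr, hjs, rfl⟩
    have hQ : {q : Amb n | (∃ k l : Fin n, k ≠ l ∧ ({k, l} : Set (Fin n)) ≠ {r, s} ∧
          (k = r ∨ k = s ∨ l = r ∨ l = s) ∧ q = xpt pts a k l) ∧
        Adj pts (M + 1) (xpt pts a i j) q}
        = {xpt pts a i r, xpt pts a i s, xpt pts a j r, xpt pts a j s} := by
      ext q
      simp only [Set.mem_setOf_eq, Set.mem_insert_iff, Set.mem_singleton_iff]
      constructor
      · rintro ⟨⟨k, l, hkl, hklrs, htouch, rfl⟩, hadj⟩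
        obtain ⟨hne', w, ⟨z1, ⟨t1, rfl⟩, hw1⟩, ⟨z2, ⟨t2, rfl⟩, hw2⟩⟩ := hadj
        obtain ⟨hwa, hd1⟩ := key pts hpts w t1 a i j hij hw1
        obtain ⟨-, hd2⟩ := key pts hpts w t2 a k l hkl hw2
        rcases hd1 with ⟨hwl, -⟩ | ⟨hwl, -⟩ <;> rcases hd2 with ⟨hwk, -⟩ | ⟨hwk, -⟩
        · -- w last = i and w last = k : k = i
          have hk : k = i := by rw [← hwk, hwl]
          subst hk
          rcases htouch with h | h | h | h
          · exact absurd h hir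
          · exact absurd h his
          · subst h; tauto
          · subst h; tauto
        · have hl : l = i := by rw [← hwk, hwl]
          subst hl
          rcases htouch with h | h | h | h
          · subst h; rw [xpt_comm]; tauto
          · subst h; rw [xpt_comm]; tauto
          · exact absurd h hir
          · exact absurd h his
        · have hk : k = j := by rw [← hwk, hwl]
          subst hk
          rcases htouch with h | h | h | h
          · exact absurd h hjr
          · exact absurd h hjs
          · subst h; tauto
          · subst h; tauto
        · have hl : l = j := by rw [← hwk, hwl]
          subst hl
          rcases htouch with h | h | h | h
          · subst h; rw [xpt_comm]; tauto
          · subst h; rw [xpt_comm]; tauto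
          · exact absurd h hjr
          · exact absurd h hjs
      · have hmemF : ∀ (x y : Fin n), x ≠ r → x ≠ s → y = r ∨ y = s → x ≠ y ∧
            ({x, y} : Set (Fin n)) ≠ {r, s} ∧ (x = r ∨ x = s ∨ y = r ∨ y = s) := by
          intro x y hxr hxs hy
          refine ⟨by rcases hy with rfl | rfl <;> assumption, ?_, by tauto⟩
          intro hset
          have hx : (x : Fin n) ∈ ({r, s} : Set (Fin n)) := hset ▸ Set.mem_insert x {y}
          rcases hx with hx | hx
          · exact hxr hx
          · exact hxs hx
        rintro (rfl | rfl | rfl | rfl)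
        · exact ⟨⟨i, r, (hmemF i r hir his (Or.inl rfl)).1, (hmemF i r hir his (Or.inl rfl)).2.1,
            (hmemF i r hir his (Or.inl rfl)).2.2, rfl⟩,
            adj_common pts a i j r (hNE hir (Or.inr hjr) (Or.inl hir))⟩
        · exact ⟨⟨i, s, (hmemF i s hir his (Or.inr rfl)).1, (hmemF i s hir his (Or.inr rfl)).2.1,
            (hmemF i s hir his (Or.inr rfl)).2.2, rfl⟩,
            adj_common pts a i j s (hNE his (Or.inr hjs) (Or.inl his))⟩
        · refine ⟨⟨j, r, (hmemF j r hjr hjs (Or.inl rfl)).1, (hmemF j r hjr hjs (Or.inl rfl)).2.1,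
            (hmemF j r hjr hjs (Or.inl rfl)).2.2, rfl⟩, ?_⟩
          rw [xpt_comm pts a i j]
          exact adj_common pts a j i r (hNE hjr (Or.inr hir) (Or.inl hjr))
        · refine ⟨⟨j, s, (hmemF j s hjr hjs (Or.inr rfl)).1, (hmemF j s hjr hjs (Or.inr rfl)).2.1,
            (hmemF j s hjr hjs (Or.inr rfl)).2.2, rfl⟩, ?_⟩
          rw [xpt_comm pts a i j]
          exact adj_common pts a j i s (hNE hjs (Or.inr his) (Or.inl hjs))
    rw [hQ]
    have h12 : xpt pts a i r ≠ xpt pts a i s := hNE his (Or.inr hrs) (Or.inl his)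
    have h13 : xpt pts a i r ≠ xpt pts a j r := hNE hjr (Or.inl hij) (Or.inr (Ne.symm hjr))
    have h14 : xpt pts a i r ≠ xpt pts a j s := hNE hjs (Or.inl hij) (Or.inl his)
    have h23 : xpt pts a i s ≠ xpt pts a j r := hNE hjr (Or.inl hij) (Or.inl hir)
    have h24 : xpt pts a i s ≠ xpt pts a j s := hNE hjs (Or.inl hij) (Or.inr (Ne.symm hjs))
    have h34 : xpt pts a j r ≠ xpt pts a j s := hNE hjs (Or.inr hrs) (Or.inl hjs)
    have hnm1 : xpt pts a i r ∉ ({xpt pts a i s, xpt pts a j r, xpt pts a j s} : Set (Amb n)) := by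
      simp only [Set.mem_insert_iff, Set.mem_singleton_iff]
      push_neg
      exact ⟨h12, h13, h14⟩
    have hnm2 : xpt pts a i s ∉ ({xpt pts a j r, xpt pts a j s} : Set (Amb n)) := by
      simp only [Set.mem_insert_iff, Set.mem_singleton_iff]
      push_neg
      exact ⟨h23, h24⟩
    have hnm3 : xpt pts a j r ∉ ({xpt pts a j s} : Set (Amb n)) := by simpa using h34
    rw [Set.ncard_insert_of_notMem hnm1, Set.ncard_insert_of_notMem hnm2,
      Set.ncard_insert_of_notMem hnm3, Set.ncard_singleton]
end
end

section
/- Description of the new vertices at level m: For every m ≥ 1, V_m \ V_{m−1} = { f_a((x_r + x_s)/2) : a ∈ (Fin n)^{m−1}, r, s < n, r ≠ s }; that is, the vertices of Γ_m that do not belong to Γ_{m−1} are exactly the images under the (m−1)-contractions f_a of the midpoints of pairs of distinct boundary points. -/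
open Finset

noncomputable section

-- aux lemmas
lemma exists_fun_ofFn {α : Type*} (m' : ℕ) (a : List α) (h : a.length = m') :
    ∃ w : Fin m' → α, List.ofFn w = a := by subst h; exact ⟨a.get, List.ofFn_get a⟩

lemma fmap_eq_midpoint {n : ℕ} (pts : Fin n → Amb n) (i : Fin n) (x : Amb n) :
    fmap pts i x = midpoint ℝ x (pts i) := by
  rw [midpoint_eq_smul_add, invOf_eq_inv]; rfl

lemma map_fList {n : ℕ} (pts : Fin n → Amb n) (g : Amb n →ᵃ[ℝ] ℝ)
    (hg : ∀ i, ∃ z : ℤ, g (pts i) = z)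
    (l : List (Fin n)) (x : Amb n) (c : ℝ) (hx : g x = c) :
    ∃ M : ℤ, 2 ^ l.length * g (fList pts l x) = M + c := by
  induction l with
  | nil => exact ⟨0, by simp [fList, hx]⟩
  | cons i t ih =>
    obtain ⟨M, hM⟩ := ih
    obtain ⟨z, hz⟩ := hg i
    refine ⟨M + 2 ^ t.length * z, ?_⟩
    have h1 : g (fList pts (i :: t) x) = midpoint ℝ (g (fList pts t x)) (g (pts i)) := by
      show g (fmap pts i (fList pts t x)) = _
      rw [fmap_eq_midpoint, AffineMap.map_midpoint]
    rw [h1, midpoint_eq_smul_add, invOf_eq_inv, smul_eq_mul, List.length_cons, pow_succ]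
    push_cast
    rw [hz]
    nlinarith [hM]

lemma mem_V_iff {n : ℕ} (pts : Fin n → Amb n) (m : ℕ) (p : Amb n) :
    p ∈ V pts m ↔ ∃ l : List (Fin n), l.length = m ∧ ∃ j, fList pts l (pts j) = p := by
  constructor
  · intro hp
    obtain ⟨w, x, ⟨j, rfl⟩, rfl⟩ := Set.mem_iUnion.1 hp
    exact ⟨List.ofFn w, by simp, j, rfl⟩
  · rintro ⟨l, rfl, j, rfl⟩
    obtain ⟨w, hw⟩ := exists_fun_ofFn l.length l rfl
    exact Set.mem_iUnion.2 ⟨w, pts j, ⟨j, rfl⟩, by rw [fWord, hw]⟩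

lemma fList_append {n : ℕ} (pts : Fin n → Amb n) (l₁ l₂ : List (Fin n)) (x : Amb n) :
    fList pts (l₁ ++ l₂) x = fList pts l₁ (fList pts l₂ x) := by
  induction l₁ with
  | nil => rfl
  | cons i t ih => simp [fList, ih]


/-- The new vertices at level m are exactly the images of midpoints of
distinct boundary points under the (m-1)-contractions. -/
theorem new_vertices_description
    (n : ℕ) (hn : 2 ≤ n) (pts : Fin n → Amb n) (hpts : AffineIndependent ℝ pts)
    (m : ℕ) (hm : 1 ≤ m) :
    V pts m \ V pts (m - 1) =
      {p : Amb n | ∃ (a : Fin (m - 1) → Fin n) (r t : Fin n), r ≠ t ∧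
        p = xpt pts a r t} := by
  simp only [xpt]
  classical
  have htot : affineSpan ℝ (Set.range pts) = ⊤ :=
    hpts.affineSpan_eq_top_iff_card_eq_finrank_add_one.2 (by
      simp [finrank_euclideanSpace_fin]; omega)
  let b : AffineBasis (Fin n) ℝ (Amb n) := ⟨pts, hpts, htot⟩
  have hb : ∀ i, b i = pts i := fun i => rfl
  ext p
  constructor
  · rintro ⟨hp1, hp2⟩
    obtain ⟨l, hl, j, rfl⟩ := (mem_V_iff pts m _).1 hp1
    have hne : l ≠ [] := by rintro rfl; simp at hl; omega
    set r := l.getLast hne with hr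
    set a := l.dropLast with ha
    have hdec : a ++ [r] = l := List.dropLast_append_getLast hne
    have hlen : a.length = m - 1 := by
      rw [ha, List.length_dropLast, hl]
    have hsplit : fList pts l (pts j) = fList pts a (fmap pts r (pts j)) := by
      rw [← hdec, fList_append]; rfl
    by_cases hrj : r = j
    · exfalso
      apply hp2
      have : fmap pts r (pts j) = pts j := by
        rw [hrj, fmap]
        rw [← two_smul ℝ (pts j), smul_smul]
        norm_num
      rw [(mem_V_iff pts (m-1) _)]
      exact ⟨a, hlen, j, by rw [hsplit, this]⟩
    · obtain ⟨w, hw⟩ := exists_fun_ofFn (m-1) a hlen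
      refine ⟨w, r, j, hrj, ?_⟩
      rw [hsplit, fWord, hw]
      rw [fmap, add_comm]
  · rintro ⟨a, r, t, hrt, rfl⟩
    constructor
    · rw [mem_V_iff]
      refine ⟨List.ofFn a ++ [r], by simp; omega, t, ?_⟩
      have h1 : fList pts [r] (pts t) = (2:ℝ)⁻¹ • (pts r + pts t) := by
        show fmap pts r (pts t) = _
        rw [fmap, add_comm]
      rw [fList_append, fWord, h1]
    · intro hmem
      obtain ⟨l, hl, j, hj⟩ := (mem_V_iff pts (m-1) _).1 hmem
      set g := b.coord r with hg
      have hgi : ∀ i, ∃ z : ℤ, g (pts i) = z := by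
        intro i
        refine ⟨if r = i then 1 else 0, ?_⟩
        rw [hg, ← hb i, b.coord_apply]
        split <;> simp
      obtain ⟨z₀, hz₀⟩ := hgi j
      obtain ⟨M₁, hM₁⟩ := map_fList pts g hgi l (pts j) z₀ hz₀
      have hmid : g ((2:ℝ)⁻¹ • (pts r + pts t)) = 1/2 := by
        have : (2:ℝ)⁻¹ • (pts r + pts t) = midpoint ℝ (pts r) (pts t) := by
          rw [midpoint_eq_smul_add, invOf_eq_inv]
        rw [this, hg, AffineMap.map_midpoint]
        have h1 : b.coord r (pts r) = 1 := by rw [← hb r]; exact b.coord_apply_eq r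
        have h2 : b.coord r (pts t) = 0 := by rw [← hb t]; exact b.coord_apply_ne hrt
        rw [h1, h2, midpoint_eq_smul_add, invOf_eq_inv, smul_eq_mul]
        norm_num
      obtain ⟨M₂, hM₂⟩ := map_fList pts g hgi (List.ofFn a) _ (1/2) hmid
      rw [List.length_ofFn] at hM₂
      rw [hj, hl] at hM₁
      simp only [fWord] at hM₁
      rw [hM₂] at hM₁
      have : ((2 * (M₁ - M₂ + z₀) : ℤ) : ℝ) = ((1 : ℤ) : ℝ) := by push_cast; linarith
      have := Int.cast_injective this
      omega
end
end
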